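/- The quotient ring ℤ[x]/((x − 1)(x² + x − 4)) is isomorphic, as a ring, to the subring {(a, b + cα) ∈ ℤ × A : a, b, c ∈ ℤ, a ≡ b + c (mod 2)} of ℤ × A, where A := ℤ[y]/(y² + y − 4) and α denotes the class of y in A; the isomorphism sends the class of x to (1, α). -/

import Mathlib

open Polynomial

/-- The ring `A = ℤ[y]/(y² + y − 4) = ℤ[α]`, the ring of integers of `ℚ(√17)`. -/
noncomputable abbrev A16 : Type := Polynomial ℤ ⧸ Ideal.span {(X : Polynomial ℤ) ^ 2 + X - 4}

/-- `α`, the class of `y` in `A = ℤ[y]/(y² + y − 4)`. -/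
noncomputable def alpha : A16 :=
  Ideal.Quotient.mk (Ideal.span {(X : Polynomial ℤ) ^ 2 + X - 4}) X

/-- The ideal `((x − 1)(x² + x − 4))` of `ℤ[x]`. -/
noncomputable def I35 : Ideal (Polynomial ℤ) :=
  Ideal.span {(X - 1) * (X ^ 2 + X - 4)}

noncomputable def phi : Polynomial ℤ →+* ℤ × A16 :=
  (Polynomial.evalRingHom 1).prod (Ideal.Quotient.mk (Ideal.span {(X : Polynomial ℤ) ^ 2 + X - 4}))

lemma mkg : Ideal.Quotient.mk (Ideal.span {(X : Polynomial ℤ) ^ 2 + X - 4}) ((X : Polynomial ℤ) ^ 2 + X - 4) = 0 := by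
  rw [Ideal.Quotient.eq_zero_iff_mem]
  exact Ideal.subset_span rfl

lemma ker_phi : RingHom.ker phi = I35 := by
  ext p
  have hprime : Prime ((X : Polynomial ℤ) - 1) := by
    simpa using prime_X_sub_C (1 : ℤ)
  constructor
  · intro hp
    rw [RingHom.mem_ker, phi, RingHom.prod_apply, Prod.mk_eq_zero] at hp
    obtain ⟨h1, h2⟩ := hp
    rw [Ideal.Quotient.eq_zero_iff_mem, Ideal.mem_span_singleton] at h2
    obtain ⟨q, hq⟩ := h2
    have h1' : ((X : Polynomial ℤ) - 1) ∣ p := by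
      have hm : p ∈ RingHom.ker (evalRingHom (1 : ℤ)) := h1
      rw [Polynomial.ker_evalRingHom] at hm
      simpa [Ideal.mem_span_singleton] using hm
    rw [hq] at h1'
    rcases hprime.dvd_or_dvd h1' with h | h
    · exfalso
      obtain ⟨r, hr⟩ := h
      have := congrArg (Polynomial.eval (1 : ℤ)) hr
      simp at this
    · obtain ⟨r, hr⟩ := h
      rw [I35, Ideal.mem_span_singleton]
      exact ⟨r, by rw [hq, hr]; ring⟩
  · intro hp
    rw [I35, Ideal.mem_span_singleton] at hp
    obtain ⟨r, hr⟩ := hp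
    rw [RingHom.mem_ker, phi, RingHom.prod_apply, Prod.mk_eq_zero]
    constructor
    · simp [hr]
    · rw [hr]
      simp [mul_comm, mul_assoc, mkg, map_mul]

lemma monic_g : ((X : Polynomial ℤ) ^ 2 + X - 4).Monic := by
  monicity!

lemma degree_g : ((X : Polynomial ℤ) ^ 2 + X - 4).degree = 2 := by
  compute_degree!

lemma cast_mk (n : ℤ) : ((n : ℤ) : A16) =
    Ideal.Quotient.mk (Ideal.span {(X : Polynomial ℤ) ^ 2 + X - 4}) (C n) := by
  have h : (C n : Polynomial ℤ) = (n : Polynomial ℤ) := C_eq_intCast n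
  rw [h, map_intCast]

lemma range_phi : ((phi.range : Subring (ℤ × A16)) : Set (ℤ × A16)) =
    {p | ∃ b c : ℤ, p.2 = (b : A16) + (c : A16) * alpha ∧ p.1 ≡ b + c [ZMOD 2]} := by
  set g : Polynomial ℤ := X ^ 2 + X - 4 with hg
  ext ⟨a, v⟩
  simp only [Set.mem_setOf_eq, SetLike.mem_coe, RingHom.mem_range]
  constructor
  · rintro ⟨q, hq⟩
    rw [phi, RingHom.prod_apply, Prod.mk.injEq] at hq
    obtain ⟨ha, hv⟩ := hq
    set r : Polynomial ℤ := q %ₘ g with hr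
    have hdeg : r.natDegree ≤ 1 := by
      have h2 : r.degree < g.degree := degree_modByMonic_lt q monic_g
      rw [degree_g] at h2
      exact natDegree_le_iff_degree_le.2 (Order.le_of_lt_succ (by exact_mod_cast h2))
    have hq1 : q = g * (q /ₘ g) + r := by
      have := modByMonic_add_div q g
      linear_combination -this
    refine ⟨r.coeff 0, r.coeff 1, ?_, ?_⟩
    · rw [← hv]
      have hmk : Ideal.Quotient.mk (Ideal.span {g}) q = Ideal.Quotient.mk (Ideal.span {g}) r := by
        rw [Ideal.Quotient.eq]
        rw [show q - r = g * (q /ₘ g) by linear_combination hq1]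
        exact Ideal.mem_span_singleton.2 ⟨_, rfl⟩
      rw [hmk]
      conv_lhs => rw [eq_X_add_C_of_natDegree_le_one hdeg]
      simp only [map_add, map_mul, alpha, cast_mk, hg]
      ring
    · have hc := congrArg (eval 1) hq1
      rw [eval_add, eval_mul] at hc
      have hrv : r.eval 1 = r.coeff 0 + r.coeff 1 := by
        conv_lhs => rw [eq_X_add_C_of_natDegree_le_one hdeg]
        simp; ring
      have hgv : g.eval 1 = -2 := by simp [hg]
      rw [hrv, hgv] at hc
      rw [← ha, coe_evalRingHom, hc]
      unfold Int.ModEq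
      omega
  · rintro ⟨b, c, hv, hmod⟩
    obtain ⟨k, hk⟩ : (2 : ℤ) ∣ (b + c) - a := Int.ModEq.dvd hmod
    refine ⟨C b + C c * X + C k * g, ?_⟩
    rw [phi, RingHom.prod_apply, Prod.mk.injEq]
    constructor
    · simp only [coe_evalRingHom, eval_add, eval_mul, eval_C, eval_X, hg, eval_sub,
        eval_pow, eval_ofNat]
      omega
    · rw [hv]
      simp only [hg, map_add, map_mul, mkg, mul_zero, add_zero, alpha, cast_mk]

/-- `ℤ[x]/((x − 1)(x² + x − 4))` is isomorphic as a ring to the subring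
`{(a, b + cα) ∈ ℤ × A : a ≡ b + c (mod 2)}` of `ℤ × A`, where `A = ℤ[y]/(y² + y − 4)`
and `α` is the class of `y`; the isomorphism sends the class of `x` to `(1, α)`. -/
theorem stmt16 :
    ∃ S : Subring (ℤ × A16),
      (S : Set (ℤ × A16)) =
        {p | ∃ b c : ℤ, p.2 = (b : A16) + (c : A16) * alpha ∧ p.1 ≡ b + c [ZMOD 2]} ∧
      ∃ e : (Polynomial ℤ ⧸ I35) ≃+* S,
        ((e (Ideal.Quotient.mk I35 X) : ℤ × A16)) = ((1 : ℤ), alpha) := by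
  refine ⟨phi.range, range_phi, ?_⟩
  refine ⟨(Ideal.quotEquivOfEq ker_phi.symm).trans (RingHom.quotientKerEquivRange phi), ?_⟩
  have h1 : ((RingHom.quotientKerEquivRange phi) (Ideal.Quotient.mk (RingHom.ker phi) X) : ℤ × A16) = phi X := rfl
  simp only [RingEquiv.trans_apply, Ideal.quotEquivOfEq_mk, h1]
  rw [phi, RingHom.prod_apply, alpha]
  simp
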